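/- Suppose the non-symmetric Riccati terminal value problem for Λ_2 has a solution on [0, T]. Let χ_1 : [0,T] → ℝ^n be the unique solution of χ̇_1 = (Λ_1 M + Λ_2 M − Aᵀ) χ_1 + Q η, χ_1(T) = −Q_f η_f, and let X̄ : [0,T] → ℝ^n be the unique solution of dX̄/dt = (A − M(Λ_1 + Λ_2) + G) X̄ − M χ_1, X̄(0) = x_0. Then the MFG TPBV problem has a unique solution (X̄*, s), and it is given by X̄*(t) = X̄(t) and s(t) = Λ_2(t) X̄(t) + χ_1(t) for t ∈ [0, T]. -/

import Mathlib

open Matrix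

/-- `M = B R⁻¹ Bᵀ`. -/
noncomputable def Mmat (n n1 : ℕ) (B : Matrix (Fin n) (Fin n1) ℝ)
    (R : Matrix (Fin n1) (Fin n1) ℝ) : Matrix (Fin n) (Fin n) ℝ :=
  B * R⁻¹ * Bᵀ

/-- The `2n × 2n` coefficient matrix `𝔸(t)` of the TPBV problem, where `L1 = Λ₁(t)`. -/
noncomputable def bbA (n n1 : ℕ) (A G Q Γ : Matrix (Fin n) (Fin n) ℝ)
    (B : Matrix (Fin n) (Fin n1) ℝ) (R : Matrix (Fin n1) (Fin n1) ℝ)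
    (L1 : Matrix (Fin n) (Fin n) ℝ) :
    Matrix (Fin n ⊕ Fin n) (Fin n ⊕ Fin n) ℝ :=
  Matrix.fromBlocks (A - Mmat n n1 B R * L1 + G) (-(Mmat n n1 B R))
    (Q * Γ - L1 * G) (-Aᵀ + L1 * Mmat n n1 B R)

/-- `Λ₁` solves the symmetric Riccati TVP on `[0,T]`. -/
def IsLam1Sol (n n1 : ℕ) (A Q Qf : Matrix (Fin n) (Fin n) ℝ)
    (B : Matrix (Fin n) (Fin n1) ℝ) (R : Matrix (Fin n1) (Fin n1) ℝ) (T : ℝ)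
    (Λ1 : ℝ → Matrix (Fin n) (Fin n) ℝ) : Prop :=
  (∀ t ∈ Set.Icc (0:ℝ) T, ∀ r c,
    HasDerivWithinAt (fun s => Λ1 s r c)
      ((Λ1 t * Mmat n n1 B R * Λ1 t - (Λ1 t * A + Aᵀ * Λ1 t) - Q) r c)
      (Set.Icc (0:ℝ) T) t)
  ∧ Λ1 T = Qf

/-- `Φ(t,τ)` is the fundamental solution matrix of `∂Φ/∂t = 𝔸(t) Φ`, `Φ(τ,τ) = I`,
for `t, τ ∈ [0,T]`. -/
def IsFundSol (n n1 : ℕ) (A G Q Γ : Matrix (Fin n) (Fin n) ℝ)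
    (B : Matrix (Fin n) (Fin n1) ℝ) (R : Matrix (Fin n1) (Fin n1) ℝ) (T : ℝ)
    (Λ1 : ℝ → Matrix (Fin n) (Fin n) ℝ)
    (Φ : ℝ → ℝ → Matrix (Fin n ⊕ Fin n) (Fin n ⊕ Fin n) ℝ) : Prop :=
  ∀ τ ∈ Set.Icc (0:ℝ) T, Φ τ τ = 1 ∧
    ∀ t ∈ Set.Icc (0:ℝ) T, ∀ p q,
      HasDerivWithinAt (fun s => Φ s τ p q)
        ((bbA n n1 A G Q Γ B R (Λ1 t) * Φ t τ) p q) (Set.Icc (0:ℝ) T) t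

/-- `Z₁ = Φ₂₂(T,0) + Q_f Γ_f Φ₁₂(T,0)`. -/
noncomputable def Z1mat (n : ℕ) (Qf Γf : Matrix (Fin n) (Fin n) ℝ) (T : ℝ)
    (Φ : ℝ → ℝ → Matrix (Fin n ⊕ Fin n) (Fin n ⊕ Fin n) ℝ) :
    Matrix (Fin n) (Fin n) ℝ :=
  (Φ T 0).toBlocks₂₂ + Qf * Γf * (Φ T 0).toBlocks₁₂

/-- `Z₂ = [Φ₂₁(T,0) + Q_f Γ_f Φ₁₁(T,0)] x₀ + Q_f η_f
      + ∫₀ᵀ [Φ₂₂(T,τ) + Q_f Γ_f Φ₁₂(T,τ)] Q η dτ`. -/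
noncomputable def Z2vec (n : ℕ) (Q Qf Γf : Matrix (Fin n) (Fin n) ℝ)
    (η ηf x0 : Fin n → ℝ) (T : ℝ)
    (Φ : ℝ → ℝ → Matrix (Fin n ⊕ Fin n) (Fin n ⊕ Fin n) ℝ)
    (j : Fin n) : ℝ :=
  (((Φ T 0).toBlocks₂₁ + Qf * Γf * (Φ T 0).toBlocks₁₁) *ᵥ x0) j
    + (Qf *ᵥ ηf) j
    + ∫ τ in (0:ℝ)..T,
        ((((Φ T τ).toBlocks₂₂ + Qf * Γf * (Φ T τ).toBlocks₁₂) *ᵥ (Q *ᵥ η)) j)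

/-- `(X̄, s)` solves the MFG TPBV problem on `[0,T]`. -/
def IsTPBVSol (n n1 : ℕ) (A G Q Qf Γ Γf : Matrix (Fin n) (Fin n) ℝ)
    (B : Matrix (Fin n) (Fin n1) ℝ) (R : Matrix (Fin n1) (Fin n1) ℝ)
    (η ηf x0 : Fin n → ℝ) (T : ℝ)
    (Λ1 : ℝ → Matrix (Fin n) (Fin n) ℝ) (X s : ℝ → Fin n → ℝ) : Prop :=
  (∀ t ∈ Set.Icc (0:ℝ) T, ∀ j,
    HasDerivWithinAt (fun u => X u j)
      (((A - Mmat n n1 B R * Λ1 t + G) *ᵥ X t - Mmat n n1 B R *ᵥ s t) j)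
      (Set.Icc (0:ℝ) T) t)
  ∧ (∀ t ∈ Set.Icc (0:ℝ) T, ∀ j,
    HasDerivWithinAt (fun u => s u j)
      ((-((Aᵀ - Λ1 t * Mmat n n1 B R) *ᵥ s t) - (Λ1 t * G) *ᵥ X t
        + Q *ᵥ (Γ *ᵥ X t + η)) j)
      (Set.Icc (0:ℝ) T) t)
  ∧ X 0 = x0
  ∧ s T = -(Qf *ᵥ (Γf *ᵥ X T + ηf))

/-- Right-hand side of the non-symmetric Riccati ODE for `Λ₂` (with `M = B R⁻¹ Bᵀ`). -/
noncomputable def lam2RHS (n n1 : ℕ) (A G Q Γ : Matrix (Fin n) (Fin n) ℝ)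
    (B : Matrix (Fin n) (Fin n1) ℝ) (R : Matrix (Fin n1) (Fin n1) ℝ)
    (L1 L2 : Matrix (Fin n) (Fin n) ℝ) : Matrix (Fin n) (Fin n) ℝ :=
  L1 * Mmat n n1 B R * L2 + L2 * Mmat n n1 B R * L1 + L2 * Mmat n n1 B R * L2
    - (L1 * G + L2 * (A + G) + Aᵀ * L2) + Q * Γ

open Set

namespace TPBVAux

/-- Gronwall: homogeneous linear ODE with zero initial condition has zero solution. -/
lemma linode_zero {n : ℕ} {T : ℝ} (hT : (0:ℝ) ≤ T) (C : ℝ → Matrix (Fin n) (Fin n) ℝ)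
    (hC : ∀ r c, ContinuousOn (fun t => C t r c) (Icc 0 T))
    (f : ℝ → Fin n → ℝ)
    (hf : ∀ t ∈ Icc (0:ℝ) T, ∀ j,
      HasDerivWithinAt (fun u => f u j) ((C t *ᵥ f t) j) (Icc (0:ℝ) T) t)
    (h0 : f 0 = 0) : ∀ t ∈ Icc (0:ℝ) T, f t = 0 := by
  have hf' : ∀ t ∈ Icc (0:ℝ) T, HasDerivWithinAt f (C t *ᵥ f t) (Icc (0:ℝ) T) t := by
    intro t ht
    exact hasDerivWithinAt_pi.2 (fun j => hf t ht j)
  have hcont : ContinuousOn f (Icc 0 T) := fun t ht => (hf' t ht).continuousWithinAt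
  set g : ℝ → (Fin n → Fin n → ℝ) := fun t r c => C t r c with hg
  have hCc : ContinuousOn g (Icc 0 T) :=
    continuousOn_pi.2 fun r => continuousOn_pi.2 fun c => hC r c
  obtain ⟨K0, hK0⟩ := (isCompact_Icc).exists_bound_of_continuousOn hCc
  set K : ℝ := n * max K0 0 with hK
  have hbound : ∀ x ∈ Ico (0:ℝ) T, ‖C x *ᵥ f x‖ ≤ K * ‖f x‖ + 0 := by
    intro x hx
    rw [add_zero]
    have hxI : x ∈ Icc (0:ℝ) T := Ico_subset_Icc_self hx
    have hmul : ∀ j, |(C x *ᵥ f x) j| ≤ K * ‖f x‖ := by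
      intro j
      have : (C x *ᵥ f x) j = ∑ k, C x j k * f x k := by
        simp [Matrix.mulVec, dotProduct]
      rw [this]
      calc |∑ k, C x j k * f x k| ≤ ∑ k, |C x j k * f x k| := Finset.abs_sum_le_sum_abs _ _
        _ ≤ ∑ _k : Fin n, max K0 0 * ‖f x‖ := by
            apply Finset.sum_le_sum
            intro k _
            rw [abs_mul]
            apply mul_le_mul
            · calc |C x j k| ≤ ‖g x j‖ := by
                    simpa [Real.norm_eq_abs] using norm_le_pi_norm (g x j) k
                _ ≤ ‖g x‖ := norm_le_pi_norm (g x) j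
                _ ≤ max K0 0 := le_max_of_le_left (hK0 x hxI)
            · simpa [Real.norm_eq_abs] using norm_le_pi_norm (f x) k
            · exact abs_nonneg _
            · exact le_max_right _ _
        _ = K * ‖f x‖ := by
            rw [Finset.sum_const, Finset.card_univ, Fintype.card_fin, nsmul_eq_mul, hK, mul_assoc]
    rcases Nat.eq_zero_or_pos n with h | h
    · have h0' : (C x *ᵥ f x) = 0 := by
        funext j; exact absurd j.2 (by omega)
      simp [h0']; positivity
    · apply (pi_norm_le_iff_of_nonneg (by positivity)).2
      intro j
      simpa [Real.norm_eq_abs] using hmul j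
  have := norm_le_gronwallBound_of_norm_deriv_right_le hcont
    (f' := fun x => C x *ᵥ f x) (δ := 0) (K := K) (ε := 0)
    (fun x hx => (hf' x (Ico_subset_Icc_self hx)).mono_of_mem_nhdsWithin
      (mem_nhdsWithin.2 ⟨Iio T, isOpen_Iio, hx.2, by
          rintro y ⟨hy1, hy2⟩
          exact ⟨le_trans hx.1 hy2, le_of_lt hy1⟩⟩))
    (by simp [h0]) hbound
  intro t ht
  have h := this t ht
  rw [gronwallBound_ε0_δ0] at h
  exact norm_le_zero_iff.1 h

/-- Backward version: zero terminal condition. -/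
lemma linode_zero' {n : ℕ} {T : ℝ} (hT : (0:ℝ) ≤ T) (C : ℝ → Matrix (Fin n) (Fin n) ℝ)
    (hC : ∀ r c, ContinuousOn (fun t => C t r c) (Icc 0 T))
    (f : ℝ → Fin n → ℝ)
    (hf : ∀ t ∈ Icc (0:ℝ) T, ∀ j,
      HasDerivWithinAt (fun u => f u j) ((C t *ᵥ f t) j) (Icc (0:ℝ) T) t)
    (hfT : f T = 0) : ∀ t ∈ Icc (0:ℝ) T, f t = 0 := by
  have hmaps : MapsTo (fun u : ℝ => T - u) (Icc 0 T) (Icc 0 T) := by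
    rintro u ⟨h1, h2⟩
    simp only [mem_Icc]
    constructor <;> linarith
  have key := linode_zero hT (fun t => -(C (T - t)))
    (by
      intro r c
      have : ContinuousOn (fun t : ℝ => C (T - t) r c) (Icc 0 T) :=
        (hC r c).comp (continuousOn_const.sub continuousOn_id) hmaps
      exact this.neg)
    (fun u => f (T - u))
    (by
      intro t ht j
      have hh : HasDerivWithinAt (fun u : ℝ => T - u) (-1) (Icc 0 T) t := by
        simpa using (hasDerivWithinAt_id t (Icc (0:ℝ) T)).const_sub T
      have h1 := (hf (T - t) (hmaps ht) j).comp t hh hmaps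
      have : HasDerivWithinAt (fun u => f (T - u) j)
          ((C (T - t) *ᵥ f (T - t)) j * (-1)) (Icc 0 T) t := h1
      simpa [Matrix.neg_mulVec, mul_neg_one] using this)
    (by simpa using hfT)
  intro t ht
  have h := key (T - t) (hmaps ht)
  simpa using h

/-- Derivative of `t ↦ (Λ t *ᵥ x t) j` by the product rule. -/
lemma deriv_mulVec {n : ℕ} {Λ : ℝ → Matrix (Fin n) (Fin n) ℝ} {x : ℝ → Fin n → ℝ}
    {Λ' : Matrix (Fin n) (Fin n) ℝ} {x' : Fin n → ℝ} {t : ℝ} {S : Set ℝ}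
    (hΛ : ∀ r c, HasDerivWithinAt (fun u => Λ u r c) (Λ' r c) S t)
    (hx : ∀ j, HasDerivWithinAt (fun u => x u j) (x' j) S t) (j : Fin n) :
    HasDerivWithinAt (fun u => (Λ u *ᵥ x u) j) ((Λ' *ᵥ x t + Λ t *ᵥ x') j) S t := by
  have h1 : HasDerivWithinAt (fun u => ∑ k, Λ u j k * x u k)
      (∑ k, (Λ' j k * x t k + Λ t j k * x' k)) S t :=
    HasDerivWithinAt.fun_sum fun k _ => (hΛ j k).mul (hx k)
  have h2 : (∑ k, (Λ' j k * x t k + Λ t j k * x' k)) = (Λ' *ᵥ x t + Λ t *ᵥ x') j := by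
    simp [Matrix.mulVec, dotProduct, Finset.sum_add_distrib]
  rw [h2] at h1
  exact h1

end TPBVAux


namespace TPBVAux

variable {n n1 : ℕ} (A G Q Γ : Matrix (Fin n) (Fin n) ℝ)
  (B : Matrix (Fin n) (Fin n1) ℝ) (R : Matrix (Fin n1) (Fin n1) ℝ)

lemma keyExist (L1 L2 : Matrix (Fin n) (Fin n) ℝ) (v w η : Fin n → ℝ) :
    lam2RHS n n1 A G Q Γ B R L1 L2 *ᵥ v
      + L2 *ᵥ ((A - Mmat n n1 B R * (L1 + L2) + G) *ᵥ v - Mmat n n1 B R *ᵥ w)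
      + ((L1 * Mmat n n1 B R + L2 * Mmat n n1 B R - Aᵀ) *ᵥ w + Q *ᵥ η)
    = -((Aᵀ - L1 * Mmat n n1 B R) *ᵥ (L2 *ᵥ v + w)) - (L1 * G) *ᵥ v
      + Q *ᵥ (Γ *ᵥ v + η) := by
  simp only [lam2RHS, Matrix.add_mulVec, Matrix.sub_mulVec, Matrix.mulVec_add,
    Matrix.mulVec_sub, Matrix.neg_mulVec, Matrix.mulVec_mulVec, Matrix.mul_add,
    Matrix.add_mul, Matrix.mul_sub, Matrix.sub_mul, Matrix.mul_assoc]
  abel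

lemma keyUniq (L1 L2 : Matrix (Fin n) (Fin n) ℝ) (v w sv η : Fin n → ℝ) :
    (-((Aᵀ - L1 * Mmat n n1 B R) *ᵥ sv) - (L1 * G) *ᵥ v + Q *ᵥ (Γ *ᵥ v + η))
      - (lam2RHS n n1 A G Q Γ B R L1 L2 *ᵥ v
          + L2 *ᵥ ((A - Mmat n n1 B R * L1 + G) *ᵥ v - Mmat n n1 B R *ᵥ sv)
          + ((L1 * Mmat n n1 B R + L2 * Mmat n n1 B R - Aᵀ) *ᵥ w + Q *ᵥ η))
    = (L1 * Mmat n n1 B R + L2 * Mmat n n1 B R - Aᵀ) *ᵥ (sv - (L2 *ᵥ v + w)) := by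
  simp only [lam2RHS, Matrix.add_mulVec, Matrix.sub_mulVec, Matrix.mulVec_add,
    Matrix.mulVec_sub, Matrix.neg_mulVec, Matrix.mulVec_mulVec, Matrix.mul_add,
    Matrix.add_mul, Matrix.mul_sub, Matrix.sub_mul, Matrix.mul_assoc]
  abel

lemma keyX (L1 L2 : Matrix (Fin n) (Fin n) ℝ) (v w : Fin n → ℝ) :
    (A - Mmat n n1 B R * (L1 + L2) + G) *ᵥ v - Mmat n n1 B R *ᵥ w
    = (A - Mmat n n1 B R * L1 + G) *ᵥ v - Mmat n n1 B R *ᵥ (L2 *ᵥ v + w) := by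
  simp only [Matrix.add_mulVec, Matrix.sub_mulVec, Matrix.mulVec_add,
    Matrix.mulVec_sub, Matrix.neg_mulVec, Matrix.mulVec_mulVec, Matrix.mul_add,
    Matrix.add_mul, Matrix.mul_sub, Matrix.sub_mul, Matrix.mul_assoc]
  abel

lemma keyE (L1 L2 : Matrix (Fin n) (Fin n) ℝ) (v w vb : Fin n → ℝ) :
    ((A - Mmat n n1 B R * L1 + G) *ᵥ v - Mmat n n1 B R *ᵥ (L2 *ᵥ v + w))
      - ((A - Mmat n n1 B R * (L1 + L2) + G) *ᵥ vb - Mmat n n1 B R *ᵥ w)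
    = (A - Mmat n n1 B R * (L1 + L2) + G) *ᵥ (v - vb) := by
  simp only [Matrix.add_mulVec, Matrix.sub_mulVec, Matrix.mulVec_add,
    Matrix.mulVec_sub, Matrix.neg_mulVec, Matrix.mulVec_mulVec, Matrix.mul_add,
    Matrix.add_mul, Matrix.mul_sub, Matrix.sub_mul, Matrix.mul_assoc]
  abel

end TPBVAux

open TPBVAux Set in
set_option maxHeartbeats 1000000 in
/-- If the non-symmetric Riccati TVP for `Λ₂` has a solution on
`[0,T]`, with `χ₁` solving its linear TVP and `X̄` the closed-loop mean field
trajectory, then the MFG TPBV problem has a unique solution `(X̄*, s)`, given by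
`X̄* = X̄` and `s = Λ₂ X̄ + χ₁` on `[0,T]`. -/
theorem tpbv_unique_solution_from_lam2
    (n n1 : ℕ) (hn : 0 < n) (hn1 : 0 < n1) (T : ℝ) (hT : 0 < T)
    (A G Q Qf Γ Γf : Matrix (Fin n) (Fin n) ℝ)
    (B : Matrix (Fin n) (Fin n1) ℝ) (R : Matrix (Fin n1) (Fin n1) ℝ)
    (η ηf x0 : Fin n → ℝ)
    (hQ : Q.PosSemidef) (hQf : Qf.PosSemidef) (hR : R.PosDef)
    (Λ1 : ℝ → Matrix (Fin n) (Fin n) ℝ)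
    (hΛ1 : IsLam1Sol n n1 A Q Qf B R T Λ1)
    (Λ2 : ℝ → Matrix (Fin n) (Fin n) ℝ)
    (hΛ2 : (∀ t ∈ Set.Icc (0:ℝ) T, ∀ r c,
        HasDerivWithinAt (fun s => Λ2 s r c)
          (lam2RHS n n1 A G Q Γ B R (Λ1 t) (Λ2 t) r c) (Set.Icc (0:ℝ) T) t)
      ∧ Λ2 T = -(Qf * Γf))
    (χ1 : ℝ → Fin n → ℝ)
    (hχ1 : (∀ t ∈ Set.Icc (0:ℝ) T, ∀ r,
        HasDerivWithinAt (fun s => χ1 s r)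
          (((Λ1 t * Mmat n n1 B R + Λ2 t * Mmat n n1 B R - Aᵀ) *ᵥ χ1 t
            + Q *ᵥ η) r) (Set.Icc (0:ℝ) T) t)
      ∧ χ1 T = -(Qf *ᵥ ηf))
    (Xbar : ℝ → Fin n → ℝ)
    (hXbar : (∀ t ∈ Set.Icc (0:ℝ) T, ∀ r,
        HasDerivWithinAt (fun u => Xbar u r)
          (((A - Mmat n n1 B R * (Λ1 t + Λ2 t) + G) *ᵥ Xbar t
            - Mmat n n1 B R *ᵥ χ1 t) r) (Set.Icc (0:ℝ) T) t)
      ∧ Xbar 0 = x0) :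
    (∃ X s : ℝ → Fin n → ℝ, IsTPBVSol n n1 A G Q Qf Γ Γf B R η ηf x0 T Λ1 X s) ∧
    (∀ X s : ℝ → Fin n → ℝ,
      IsTPBVSol n n1 A G Q Qf Γ Γf B R η ηf x0 T Λ1 X s →
      ∀ t ∈ Set.Icc (0:ℝ) T, X t = Xbar t ∧ s t = Λ2 t *ᵥ Xbar t + χ1 t) := by
  obtain ⟨hΛ1d, hΛ1T⟩ := hΛ1
  obtain ⟨hΛ2d, hΛ2T⟩ := hΛ2
  obtain ⟨hχ1d, hχ1T⟩ := hχ1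
  obtain ⟨hXd, hX0⟩ := hXbar
  have hcΛ1 : ∀ r c, ContinuousOn (fun t => Λ1 t r c) (Icc 0 T) :=
    fun r c t ht => (hΛ1d t ht r c).continuousWithinAt
  have hcΛ2 : ∀ r c, ContinuousOn (fun t => Λ2 t r c) (Icc 0 T) :=
    fun r c t ht => (hΛ2d t ht r c).continuousWithinAt
  -- continuity of the coefficient matrices
  have hcC : ∀ r c, ContinuousOn
      (fun t => (Λ1 t * Mmat n n1 B R + Λ2 t * Mmat n n1 B R - Aᵀ) r c) (Icc 0 T) := by
    intro r c
    simp only [Matrix.sub_apply, Matrix.add_apply, Matrix.mul_apply]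
    exact (((continuousOn_finset_sum _ fun k _ => (hcΛ1 r k).mul continuousOn_const).add
      (continuousOn_finset_sum _ fun k _ => (hcΛ2 r k).mul continuousOn_const)).sub
      continuousOn_const)
  have hcD : ∀ r c, ContinuousOn
      (fun t => (A - Mmat n n1 B R * (Λ1 t + Λ2 t) + G) r c) (Icc 0 T) := by
    intro r c
    simp only [Matrix.sub_apply, Matrix.add_apply, Matrix.mul_apply]
    exact ((continuousOn_const.sub
      (continuousOn_finset_sum _ fun k _ =>
        continuousOn_const.mul ((hcΛ1 k c).add (hcΛ2 k c)))).add continuousOn_const)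
  -- the candidate solution
  have hEx : IsTPBVSol n n1 A G Q Qf Γ Γf B R η ηf x0 T Λ1 Xbar
      (fun u => Λ2 u *ᵥ Xbar u + χ1 u) := by
    refine ⟨?_, ?_, hX0, ?_⟩
    · intro t ht j
      have h := hXd t ht j
      rw [keyX A G B R (Λ1 t) (Λ2 t) (Xbar t) (χ1 t)] at h
      exact h
    · intro t ht j
      have h1 := deriv_mulVec (hΛ2d t ht) (hXd t ht) j
      have h2 := h1.add (hχ1d t ht j)
      have h3 : HasDerivWithinAt (fun u => (Λ2 u *ᵥ Xbar u + χ1 u) j)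
          ((lam2RHS n n1 A G Q Γ B R (Λ1 t) (Λ2 t) *ᵥ Xbar t
            + Λ2 t *ᵥ ((A - Mmat n n1 B R * (Λ1 t + Λ2 t) + G) *ᵥ Xbar t
                - Mmat n n1 B R *ᵥ χ1 t)
            + ((Λ1 t * Mmat n n1 B R + Λ2 t * Mmat n n1 B R - Aᵀ) *ᵥ χ1 t
                + Q *ᵥ η)) j) (Icc 0 T) t := h2
      rw [keyExist A G Q Γ B R (Λ1 t) (Λ2 t) (Xbar t) (χ1 t) η] at h3
      exact h3
    · show Λ2 T *ᵥ Xbar T + χ1 T = _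
      rw [hΛ2T, hχ1T]
      simp only [Matrix.neg_mulVec, Matrix.mulVec_add, Matrix.mulVec_mulVec]
      abel
  refine ⟨⟨Xbar, _, hEx⟩, ?_⟩
  intro X s hsol
  obtain ⟨hXd', hsd', hX0', hsT'⟩ := hsol
  -- the defect y := s - (Λ₂ X + χ₁) vanishes
  have hy0 : ∀ t ∈ Icc (0:ℝ) T, s t - (Λ2 t *ᵥ X t + χ1 t) = 0 := by
    apply linode_zero' (le_of_lt hT)
      (fun t => Λ1 t * Mmat n n1 B R + Λ2 t * Mmat n n1 B R - Aᵀ) hcC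
      (fun u => s u - (Λ2 u *ᵥ X u + χ1 u))
    · intro t ht j
      have h1 := deriv_mulVec (hΛ2d t ht) (hXd' t ht) j
      have h2 := (hsd' t ht j).sub (h1.add (hχ1d t ht j))
      have h3 : HasDerivWithinAt (fun u => (s u - (Λ2 u *ᵥ X u + χ1 u)) j)
          (((-((Aᵀ - Λ1 t * Mmat n n1 B R) *ᵥ s t) - (Λ1 t * G) *ᵥ X t
              + Q *ᵥ (Γ *ᵥ X t + η))
            - (lam2RHS n n1 A G Q Γ B R (Λ1 t) (Λ2 t) *ᵥ X t
                + Λ2 t *ᵥ ((A - Mmat n n1 B R * Λ1 t + G) *ᵥ X t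
                    - Mmat n n1 B R *ᵥ s t)
                + ((Λ1 t * Mmat n n1 B R + Λ2 t * Mmat n n1 B R - Aᵀ) *ᵥ χ1 t
                    + Q *ᵥ η))) j) (Icc 0 T) t := h2
      rw [keyUniq A G Q Γ B R (Λ1 t) (Λ2 t) (X t) (χ1 t) (s t) η] at h3
      exact h3
    · show s T - (Λ2 T *ᵥ X T + χ1 T) = 0
      rw [hΛ2T, hχ1T, hsT']
      simp only [Matrix.neg_mulVec, Matrix.mulVec_add, Matrix.mulVec_mulVec]
      abel
  -- the difference e := X - Xbar vanishes
  have he0 : ∀ t ∈ Icc (0:ℝ) T, X t - Xbar t = 0 := by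
    apply linode_zero (le_of_lt hT)
      (fun t => A - Mmat n n1 B R * (Λ1 t + Λ2 t) + G) hcD (fun u => X u - Xbar u)
    · intro t ht j
      have hst : s t = Λ2 t *ᵥ X t + χ1 t := by
        have := hy0 t ht
        linear_combination (norm := abel) this
      have h1 := hXd' t ht j
      rw [hst] at h1
      have h2 := h1.sub (hXd t ht j)
      have h3 : HasDerivWithinAt (fun u => (X u - Xbar u) j)
          ((((A - Mmat n n1 B R * Λ1 t + G) *ᵥ X t
              - Mmat n n1 B R *ᵥ (Λ2 t *ᵥ X t + χ1 t))
            - ((A - Mmat n n1 B R * (Λ1 t + Λ2 t) + G) *ᵥ Xbar t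
              - Mmat n n1 B R *ᵥ χ1 t)) j) (Icc 0 T) t := h2
      rw [keyE A G B R (Λ1 t) (Λ2 t) (X t) (χ1 t) (Xbar t)] at h3
      exact h3
    · rw [hX0', hX0, sub_self]
  intro t ht
  have hXeq : X t = Xbar t := by
    have := he0 t ht
    linear_combination (norm := abel) this
  refine ⟨hXeq, ?_⟩
  have := hy0 t ht
  rw [hXeq] at this
  linear_combination (norm := abel) this
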